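/- Fix x ∈ ℕ. Consider 2-abacus configurations U with U↑ equal to the 2-abacus of the empty partition (first gap at (0,0)) and w(U) = x. The maximal number of removable beads on the right runner U₁ over all such U equals ⌊√x⌋. -/
import Mathlib


/-- A 2-abacus is modelled as a finite set `B ⊆ ℕ` of bead positions: the bead at
position `n` lies in row `n / 2` on runner `n % 2` (rows increase downwards; all
rows above the displayed window are full). `rem2 B` is the number of removable
beads on the right runner: beads at `(i,1)` with `(i,0)` empty. -/
def rem2 (B : Finset ℕ) : ℕ := (B.filter fun n => n % 2 = 1 ∧ n - 1 ∉ B).card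

/-- The set of values `Rem(U₁)` over 2-abaci `U` with `w(U) = x` and `U↑` equal to
the 2-abacus of the empty partition displayed with `r` full rows (first gap at
`(r, 0)`): runner `0` and runner `1` each carry `r` beads, and the total row-sum
of `U` exceeds that of the pushed-up configuration by exactly `x`. -/
def remSetEmpty (x : ℕ) : Set ℕ :=
  {m | ∃ r : ℕ, ∃ B : Finset ℕ,
    (B.filter fun n => n % 2 = 0).card = r ∧
    (B.filter fun n => n % 2 = 1).card = r ∧
    (∑ b ∈ B, b / 2) = x + r * (r - 1) ∧
    m = rem2 B}

/-- Gauss bound for finsets of naturals. -/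
lemma aux_sum_range_le : ∀ n (S : Finset ℕ), S.card = n →
    ∑ i ∈ Finset.range n, i ≤ ∑ i ∈ S, i := by
  intro n
  induction n with
  | zero => simp
  | succ n ih =>
    intro S hS
    have hne : S.Nonempty := by rw [← Finset.card_pos, hS]; omega
    have hMm : S.max' hne ∈ S := S.max'_mem hne
    have hsub : S ⊆ Finset.range (S.max' hne + 1) := fun a ha =>
      Finset.mem_range.mpr (Nat.lt_succ_of_le (S.le_max' a ha))
    have hcard : n + 1 ≤ S.max' hne + 1 := by
      calc n + 1 = S.card := hS.symm
        _ ≤ (Finset.range (S.max' hne + 1)).card := Finset.card_le_card hsub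
        _ = S.max' hne + 1 := Finset.card_range _
    have herase : (S.erase (S.max' hne)).card = n := by
      rw [Finset.card_erase_of_mem hMm, hS]; omega
    have h1 := ih (S.erase (S.max' hne)) herase
    have h2 : ∑ i ∈ S, i = S.max' hne + ∑ i ∈ S.erase (S.max' hne), i :=
      (Finset.add_sum_erase S _ hMm).symm
    rw [Finset.sum_range_succ]
    omega

lemma aux_card_le_sum (S : Finset ℕ) : S.card * (S.card - 1) ≤ 2 * ∑ i ∈ S, i := by
  have h := aux_sum_range_le S.card S rfl
  have h2 := Finset.sum_range_id_mul_two S.card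
  omega

/-- The maximal number of removable beads on the right runner, over all 2-abaci of
weight `x` whose pushed-up configuration is the abacus of the empty partition,
is `⌊√x⌋`. -/
theorem max_rem_empty (x : ℕ) : IsGreatest (remSetEmpty x) (Nat.sqrt x) := by
  constructor
  · -- membership
    set s := Nat.sqrt x with hs
    set t := x - s * s with ht
    have hsq1 : s * s ≤ x := by rw [hs]; exact Nat.sqrt_le x
    have hsq2 : x ≤ s * s + s + s := by rw [hs]; exact Nat.sqrt_le_add x
    have hst : x = s * s + t := by omega
    have hts : t ≤ 2 * s := by omega
    have ht0 : s = 0 → t = 0 := by intro h; rw [h] at hst; omega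
    set f : ℕ → ℕ := fun i => s + i + (if i + 1 = s then t else 0) with hf
    have hfs : ∀ i, s ≤ f i := by intro i; simp [hf]; omega
    have hfinj : ∀ i < s, ∀ j < s, f i = f j → i = j := by
      intro i hi j hj h
      simp only [hf] at h
      split_ifs at h <;> omega
    set B : Finset ℕ := ((Finset.range s).image fun i => 2 * i) ∪
      ((Finset.range s).image fun i => 2 * f i + 1) with hB
    have hmem : ∀ n, n ∈ B ↔ (∃ i < s, 2 * i = n) ∨ (∃ i < s, 2 * f i + 1 = n) := by
      intro n
      simp [hB, Finset.mem_union, Finset.mem_image]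
    refine ⟨s, B, ?_, ?_, ?_, ?_⟩
    · have : B.filter (fun n => n % 2 = 0) = (Finset.range s).image fun i => 2 * i := by
        ext n
        simp only [Finset.mem_filter, hmem, Finset.mem_image, Finset.mem_range]
        constructor
        · rintro ⟨⟨i, hi, rfl⟩ | ⟨i, hi, rfl⟩, h2⟩
          · exact ⟨i, hi, rfl⟩
          · omega
        · rintro ⟨i, hi, rfl⟩; exact ⟨Or.inl ⟨i, hi, rfl⟩, by omega⟩
      rw [this, Finset.card_image_of_injective _ (fun a b h => by omega), Finset.card_range]
    · have : B.filter (fun n => n % 2 = 1) = (Finset.range s).image fun i => 2 * f i + 1 := by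
        ext n
        simp only [Finset.mem_filter, hmem, Finset.mem_image, Finset.mem_range]
        constructor
        · rintro ⟨⟨i, hi, rfl⟩ | ⟨i, hi, rfl⟩, h2⟩
          · omega
          · exact ⟨i, hi, rfl⟩
        · rintro ⟨i, hi, rfl⟩; exact ⟨Or.inr ⟨i, hi, rfl⟩, by omega⟩
      rw [this, Finset.card_image_of_injOn ?_, Finset.card_range]
      intro i hi j hj h
      simp only [Finset.coe_range, Set.mem_Iio] at hi hj
      have h' : 2 * f i + 1 = 2 * f j + 1 := h
      exact hfinj i hi j hj (by omega)
    · -- the sum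
      have hdisj : Disjoint ((Finset.range s).image fun i => 2 * i)
          ((Finset.range s).image fun i => 2 * f i + 1) := by
        rw [Finset.disjoint_left]
        rintro a ha hb
        simp only [Finset.mem_image, Finset.mem_range] at ha hb
        obtain ⟨i, _, rfl⟩ := ha
        obtain ⟨j, _, hj⟩ := hb
        omega
      rw [hB, Finset.sum_union hdisj,
        Finset.sum_image (fun a _ b _ h => by omega : ∀ a ∈ Finset.range s, ∀ b ∈ Finset.range s, 2*a = 2*b → a = b),
        Finset.sum_image (fun a ha b hb h => hfinj a (Finset.mem_range.mp ha) b (Finset.mem_range.mp hb) (by omega))]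
      have e1 : ∀ i : ℕ, (2 * i) / 2 = i := fun i => by omega
      have e2 : ∀ i : ℕ, (2 * f i + 1) / 2 = f i := fun i => by omega
      simp only [e1, e2]
      have hsf : ∑ i ∈ Finset.range s, f i
          = (∑ i ∈ Finset.range s, (s + i)) + t := by
        rcases Nat.eq_zero_or_pos s with h0 | h0
        · simp [h0, ht0 h0]
        · simp only [hf, Finset.sum_add_distrib]
          congr 1
          rw [Finset.sum_eq_single_of_mem (s - 1) (Finset.mem_range.mpr (by omega))]
          · simp [Nat.sub_add_cancel h0]
          · intro i _ hi
            rw [if_neg (by omega)]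
      rw [hsf, Finset.sum_add_distrib, Finset.sum_const, Finset.card_range, smul_eq_mul]
      have g := Finset.sum_range_id_mul_two s
      omega
    · -- rem2
      have hfil : B.filter (fun n => n % 2 = 1 ∧ n - 1 ∉ B)
          = (Finset.range s).image fun i => 2 * f i + 1 := by
        ext n
        simp only [Finset.mem_filter, hmem, Finset.mem_image, Finset.mem_range]
        constructor
        · rintro ⟨⟨i, hi, rfl⟩ | ⟨i, hi, rfl⟩, h2, h3⟩
          · omega
          · exact ⟨i, hi, rfl⟩
        · rintro ⟨i, hi, rfl⟩
          refine ⟨Or.inr ⟨i, hi, rfl⟩, by omega, ?_⟩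
          rintro (⟨j, hj, hje⟩ | ⟨j, hj, hje⟩)
          · have := hfs i; omega
          · omega
      rw [rem2, hfil, Finset.card_image_of_injOn ?_, Finset.card_range]
      intro i hi j hj h
      simp only [Finset.coe_range, Set.mem_Iio] at hi hj
      have h' : 2 * f i + 1 = 2 * f j + 1 := h
      exact hfinj i hi j hj (by omega)
  · -- upper bound
    rintro m ⟨r, B, h0, h1, hsum, hm⟩
    rw [Nat.le_sqrt]
    set E := B.filter (fun n => n % 2 = 0) with hE
    set O := B.filter (fun n => n % 2 = 1) with hO
    set A := E.image (· / 2) with hA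
    set C := O.image (· / 2) with hC
    have hEinj : ∀ a ∈ E, ∀ b ∈ E, a / 2 = b / 2 → a = b := by
      intro a ha b hb h
      simp only [hE, Finset.mem_filter] at ha hb
      omega
    have hOinj : ∀ a ∈ O, ∀ b ∈ O, a / 2 = b / 2 → a = b := by
      intro a ha b hb h
      simp only [hO, Finset.mem_filter] at ha hb
      omega
    have hAcard : A.card = r := by rw [hA, Finset.card_image_of_injOn hEinj, ← h0]
    have hCcard : C.card = r := by rw [hC, Finset.card_image_of_injOn hOinj, ← h1]
    -- total sum
    have hsplit : ∑ b ∈ B, b / 2 = ∑ i ∈ A, i + ∑ i ∈ C, i := by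
      have hO' : O = B.filter (fun n => ¬ n % 2 = 0) := by
        rw [hO]
        apply Finset.filter_congr
        intro n _
        constructor <;> intro <;> omega
      rw [hA, hC, Finset.sum_image hEinj, Finset.sum_image hOinj, hO', hE,
        Finset.sum_filter_add_sum_filter_not B (fun n => n % 2 = 0) (· / 2)]
    -- rem2 as card of sdiff
    have hrem : rem2 B = (C \ A).card := by
      rw [rem2]
      have himg : (B.filter fun n => n % 2 = 1 ∧ n - 1 ∉ B).image (· / 2) = C \ A := by
        ext j
        simp only [Finset.mem_image, Finset.mem_sdiff, hC, hA, Finset.mem_filter, hE, hO]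
        constructor
        · rintro ⟨n, ⟨hnB, hodd, hgap⟩, rfl⟩
          refine ⟨⟨n, ⟨hnB, hodd⟩, rfl⟩, ?_⟩
          rintro ⟨e, ⟨heB, heven⟩, hej⟩
          have : e = n - 1 := by omega
          exact hgap (this ▸ heB)
        · rintro ⟨⟨n, ⟨hnB, hodd⟩, rfl⟩, hnot⟩
          refine ⟨n, ⟨hnB, hodd, ?_⟩, rfl⟩
          intro hn1
          exact hnot ⟨n - 1, ⟨hn1, by omega⟩, by omega⟩
      rw [← himg, Finset.card_image_of_injOn]
      intro a ha b hb h
      have h' : a / 2 = b / 2 := h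
      simp only [Finset.coe_filter, Set.mem_setOf_eq] at ha hb
      obtain ⟨-, ha2, -⟩ := ha
      obtain ⟨-, hb2, -⟩ := hb
      omega
    have hmd : m = (C \ A).card := hm.trans hrem
    -- counting
    have hc1 : (C \ A).card + (C ∩ A).card = C.card := Finset.card_sdiff_add_card_inter C A
    have hc2 : (A ∪ C).card + (A ∩ C).card = A.card + C.card := Finset.card_union_add_card_inter A C
    have hic : (A ∩ C).card = (C ∩ A).card := by rw [Finset.inter_comm]
    have hs1 : ∑ i ∈ A ∪ C, i + ∑ i ∈ A ∩ C, i = ∑ i ∈ A, i + ∑ i ∈ C, i :=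
      Finset.sum_union_inter
    have hb1 := aux_card_le_sum (A ∪ C)
    have hb2 := aux_card_le_sum (A ∩ C)
    -- arithmetic
    set u := (A ∪ C).card
    set v := (A ∩ C).card
    have hu : u = m + v + m := by omega
    have hbig : u * (u - 1) + v * (v - 1) ≤ 2 * (x + r * (r - 1)) := by
      calc u * (u - 1) + v * (v - 1) ≤ 2 * ∑ i ∈ A ∪ C, i + 2 * ∑ i ∈ A ∩ C, i := by omega
        _ = 2 * (x + r * (r - 1)) := by rw [← hsum, hsplit]; omega
    have hur : u + v = 2 * r := by omega
    have e1 : u * (u - 1) + u = u * u := by cases u <;> simp [Nat.mul_succ, Nat.succ_mul, Nat.succ_sub_one]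
    have e2 : v * (v - 1) + v = v * v := by cases v <;> simp [Nat.mul_succ, Nat.succ_mul, Nat.succ_sub_one]
    have e3 : r * (r - 1) + r = r * r := by cases r <;> simp [Nat.mul_succ, Nat.succ_mul, Nat.succ_sub_one]
    have key : u * u + v * v ≤ 2 * x + 2 * (r * r) := by omega
    have hr : r = m + v := by omega
    have e4 : u * u = v * v + 4 * (m * v) + 4 * (m * m) := by rw [hu]; ring
    have e5 : r * r = m * m + 2 * (m * v) + v * v := by rw [hr]; ring
    omega
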